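/- Let K be a nonempty closed convex subset of a real Hilbert space H, let η > 0, G ∈ H, g ∈ H, x₁, x_t ∈ H. Define v_t as a minimizer over K of v ↦ ⟨η(G+g) + (x_t - x₁), v⟩, and y_{t+1} as the minimizer over K of y ↦ η⟨G+g, y⟩ + (1/2)‖y - x₁‖². Then ⟨x_t - y_{t+1}, v_t - y_{t+1}⟩ ≤ 0. -/
import Mathlib


open RealInnerProductSpace

lemma ofw_aux_scalar (A B : ℝ) (hB : 0 ≤ B)
    (h : ∀ s : ℝ, 0 < s → s ≤ 1 → 0 ≤ s * A + s ^ 2 / 2 * B) : 0 ≤ A := by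
  by_contra hA
  push_neg at hA
  rcases eq_or_lt_of_le hB with hB0 | hB0
  · have := h 1 one_pos le_rfl
    nlinarith
  · have hs : (0:ℝ) < min 1 (-A / B) := by
      apply lt_min one_pos
      exact div_pos (neg_pos.mpr hA) hB0
    have hs1 : min 1 (-A / B) ≤ 1 := min_le_left _ _
    have h2 : min 1 (-A / B) ≤ -A / B := min_le_right _ _
    have := h _ hs hs1
    set s := min 1 (-A / B) with hsdef
    have hsB : s * B ≤ -A := (le_div_iff₀ hB0).mp h2
    nlinarith

theorem ofw_ftrl_cross_optimality
    {H : Type*} [NormedAddCommGroup H] [InnerProductSpace ℝ H] [CompleteSpace H]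
    (K : Set H) (hKne : K.Nonempty) (hKcl : IsClosed K) (hKcv : Convex ℝ K)
    (η : ℝ) (hη : 0 < η) (G g x₁ xt : H)
    (vt : H) (hvtK : vt ∈ K)
    (hvt : ∀ u ∈ K, ⟪η • (G + g) + (xt - x₁), vt⟫ ≤ ⟪η • (G + g) + (xt - x₁), u⟫)
    (yt1 : H) (hyt1K : yt1 ∈ K)
    (hyt1 : ∀ y ∈ K, η * ⟪G + g, yt1⟫ + (1/2) * ‖yt1 - x₁‖^2
              ≤ η * ⟪G + g, y⟫ + (1/2) * ‖y - x₁‖^2) :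
    ⟪xt - yt1, vt - yt1⟫ ≤ 0 := by
  -- Variational inequality for the FTRL step
  have hvar : ∀ u ∈ K, 0 ≤ ⟪η • (G + g) + (yt1 - x₁), u - yt1⟫ := by
    intro u hu
    set d := u - yt1 with hd
    have key : ∀ s : ℝ, 0 < s → s ≤ 1 →
        0 ≤ s * ⟪η • (G + g) + (yt1 - x₁), d⟫ + s ^ 2 / 2 * ‖d‖ ^ 2 := by
      intro s hs hs1
      have hyK : yt1 + s • d ∈ K := by
        have := hKcv hyt1K hu (by linarith : (0:ℝ) ≤ 1 - s) hs.le (by ring)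
        convert this using 1
        rw [hd]
        module
      have hineq := hyt1 _ hyK
      have e1 : ⟪G + g, yt1 + s • d⟫ = ⟪G + g, yt1⟫ + s * ⟪G + g, d⟫ := by
        rw [inner_add_right, real_inner_smul_right]
      have e2 : ‖yt1 + s • d - x₁‖ ^ 2
          = ‖yt1 - x₁‖ ^ 2 + 2 * (s * ⟪yt1 - x₁, d⟫) + s ^ 2 * ‖d‖ ^ 2 := by
        have : yt1 + s • d - x₁ = (yt1 - x₁) + s • d := by abel
        rw [this, norm_add_sq_real, real_inner_smul_right, norm_smul]
        simp [abs_of_pos hs]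
        ring
      have e3 : ⟪η • (G + g) + (yt1 - x₁), d⟫
          = η * ⟪G + g, d⟫ + ⟪yt1 - x₁, d⟫ := by
        rw [inner_add_left, real_inner_smul_left]
      rw [e1, e2] at hineq
      rw [e3]
      nlinarith
    exact ofw_aux_scalar _ _ (by positivity) key
  have h1 : ⟪η • (G + g) + (xt - x₁), vt - yt1⟫ ≤ 0 := by
    have := hvt yt1 hyt1K
    rw [inner_sub_right]
    linarith
  have h2 := hvar vt hvtK
  have e : ⟪xt - yt1, vt - yt1⟫
      = ⟪η • (G + g) + (xt - x₁), vt - yt1⟫ - ⟪η • (G + g) + (yt1 - x₁), vt - yt1⟫ := by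
    rw [← inner_sub_left]
    congr 1
    abel
  rw [e]
  linarith
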